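/- (Deterministic Blackwell approachability.) Let W ⊆ 𝔖 be a closed nonempty set and let (x̄_t)_{t≥t₀} be a trajectory of the dynamical system induced by f. Suppose that for every t ≥ t₀ there exists y_t ∈ W such that ‖x̄_t − y_t‖ = dist(x̄_t, W) and ⟨x̄_t − y_t, f(x̄_t) − y_t⟩ ≤ 0 (Euclidean inner product). Then dist(x̄_t, W) → 0 as t → ∞. -/

import Mathlib

/- Dynamical systems generated by memory-strategy profiles (Section 3 of the paper).
   `S` plays the role of 𝔖 ⊆ ℝ^N (a nonempty bounded convex set, in the paper the
   convex hull of the vector payoffs), and `f : E N → E N` plays the role of the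
   map `f^s = u ∘ s` induced by a memory-strategy profile `s` (so `f` maps `S` to `S`). -/

/-- Euclidean space ℝ^N. -/
abbrev E (N : ℕ) := EuclideanSpace ℝ (Fin N)

/-- `x` is a trajectory of the dynamical system induced by `f`, starting at stage
`t₀ ≥ 1` from an initial point `x t₀ ∈ S`: it is a sequence in `S` with
x̄_{t+1} = (t·x̄_t + f(x̄_t))/(t+1) for all t ≥ t₀. -/
def IsTraj {N : ℕ} (S : Set (E N)) (f : E N → E N) (t₀ : ℕ) (x : ℕ → E N) : Prop :=
  1 ≤ t₀ ∧ (∀ t : ℕ, t₀ ≤ t → x t ∈ S) ∧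
    ∀ t : ℕ, t₀ ≤ t → x (t + 1) = ((t : ℝ) + 1)⁻¹ • ((t : ℝ) • x t + f (x t))

/-- A set `Z` is invariant for the dynamical system induced by `f`:
there is `t_Z ≥ 1` such that for every `x ∈ Z` and every `t ≥ t_Z`,
(t·x + f(x))/(t+1) ∈ Z. -/
def Invariant {N : ℕ} (f : E N → E N) (Z : Set (E N)) : Prop :=
  ∃ tZ : ℕ, 1 ≤ tZ ∧ ∀ x ∈ Z, ∀ t : ℕ, tZ ≤ t →
    ((t : ℝ) + 1)⁻¹ • ((t : ℝ) • x + f x) ∈ Z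

/-- A set `Z` is an escape set: along every trajectory, for every `τ ≥ t₀` there is
`t > τ` with `x t ∉ Z`. -/
def EscapeSet {N : ℕ} (S : Set (E N)) (f : E N → E N) (Z : Set (E N)) : Prop :=
  ∀ (t₀ : ℕ) (x : ℕ → E N), IsTraj S f t₀ x →
    ∀ τ : ℕ, t₀ ≤ τ → ∃ t : ℕ, τ < t ∧ x t ∉ Z

/-- A set `Z` is absorbing: along every trajectory, for every `τ ≥ t₀` there is
`t > τ` with `x t ∈ Z`. -/
def AbsorbingSet {N : ℕ} (S : Set (E N)) (f : E N → E N) (Z : Set (E N)) : Prop :=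
  ∀ (t₀ : ℕ) (x : ℕ → E N), IsTraj S f t₀ x →
    ∀ τ : ℕ, t₀ ≤ τ → ∃ t : ℕ, τ < t ∧ x t ∈ Z

open Filter Metric

/-- Deterministic Blackwell approachability (Proposition 3.1): if `W ⊆ S` is closed
and nonempty and along the trajectory each `x̄_t` has a proximal point `y_t ∈ W`
with ⟨x̄_t − y_t, f(x̄_t) − y_t⟩ ≤ 0, then dist(x̄_t, W) → 0. -/
theorem stmt4 {N : ℕ} (S : Set (E N)) (hSconv : Convex ℝ S)
    (hSbdd : Bornology.IsBounded S) (hSne : S.Nonempty)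
    (f : E N → E N) (hf : Set.MapsTo f S S)
    (W : Set (E N)) (hWS : W ⊆ S) (hWclosed : IsClosed W) (hWne : W.Nonempty)
    (t₀ : ℕ) (x : ℕ → E N) (hx : IsTraj S f t₀ x)
    (hprox : ∀ t : ℕ, t₀ ≤ t → ∃ y ∈ W,
      ‖x t - y‖ = infDist (x t) W ∧ (inner ℝ (x t - y) (f (x t) - y) : ℝ) ≤ 0) :
    Tendsto (fun t => infDist (x t) W) atTop (nhds 0) := by
  obtain ⟨ht₀1, hmem, hrec⟩ := hx
  obtain ⟨C, hC⟩ := Metric.isBounded_iff.mp hSbdd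
  obtain ⟨z, hz⟩ := hSne
  have hC0 : 0 ≤ C := le_trans (by simp) (hC hz hz)
  set K := (t₀ : ℝ) ^ 2 * (infDist (x t₀) W) ^ 2 with hK
  have hK0 : 0 ≤ K := by positivity
  have key : ∀ t : ℕ, t₀ ≤ t →
      ((t : ℝ) + 1) ^ 2 * (infDist (x (t + 1)) W) ^ 2
        ≤ (t : ℝ) ^ 2 * (infDist (x t) W) ^ 2 + C ^ 2 := by
    intro t ht
    obtain ⟨y, hyW, hynorm, hyinner⟩ := hprox t ht
    have ht1 : ((t : ℝ) + 1) ≠ 0 := by positivity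
    have hx1 : x (t + 1) - y = ((t : ℝ) + 1)⁻¹ • ((t : ℝ) • (x t - y) + (f (x t) - y)) := by
      rw [hrec t ht]
      match_scalars <;> (field_simp; try ring)
    have hnorm1 : ‖x (t + 1) - y‖
        = ((t : ℝ) + 1)⁻¹ * ‖(t : ℝ) • (x t - y) + (f (x t) - y)‖ := by
      rw [hx1, norm_smul, Real.norm_eq_abs, abs_of_pos (by positivity)]
    have hfS : f (x t) ∈ S := hf (hmem t ht)
    have hfb : ‖f (x t) - y‖ ≤ C := by
      rw [← dist_eq_norm]; exact hC hfS (hWS hyW)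
    have hexp : ‖(t : ℝ) • (x t - y) + (f (x t) - y)‖ ^ 2
        ≤ (t : ℝ) ^ 2 * ‖x t - y‖ ^ 2 + C ^ 2 := by
      rw [norm_add_sq_real, real_inner_smul_left, norm_smul, Real.norm_eq_abs,
        abs_of_nonneg (by positivity : (0 : ℝ) ≤ (t : ℝ))]
      nlinarith [norm_nonneg (f (x t) - y), (Nat.cast_nonneg t : (0 : ℝ) ≤ (t : ℝ)),
        mul_nonpos_of_nonneg_of_nonpos (Nat.cast_nonneg t : (0 : ℝ) ≤ (t : ℝ)) hyinner]
    have hD1 : infDist (x (t + 1)) W ≤ ‖x (t + 1) - y‖ := by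
      rw [← dist_eq_norm]; exact infDist_le_dist_of_mem hyW
    have hD0 : (0 : ℝ) ≤ infDist (x (t + 1)) W := infDist_nonneg
    have h2 : ((t : ℝ) + 1) ^ 2 * (infDist (x (t + 1)) W) ^ 2
        ≤ ((t : ℝ) + 1) ^ 2 * ‖x (t + 1) - y‖ ^ 2 := by
      have h := pow_le_pow_left₀ hD0 hD1 2
      nlinarith [sq_nonneg ((t : ℝ) + 1)]
    have h3 : ((t : ℝ) + 1) ^ 2 * ‖x (t + 1) - y‖ ^ 2
        = ‖(t : ℝ) • (x t - y) + (f (x t) - y)‖ ^ 2 := by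
      rw [hnorm1]; field_simp
    rw [hynorm] at hexp
    calc ((t : ℝ) + 1) ^ 2 * (infDist (x (t + 1)) W) ^ 2
        ≤ ((t : ℝ) + 1) ^ 2 * ‖x (t + 1) - y‖ ^ 2 := h2
      _ = ‖(t : ℝ) • (x t - y) + (f (x t) - y)‖ ^ 2 := h3
      _ ≤ (t : ℝ) ^ 2 * (infDist (x t) W) ^ 2 + C ^ 2 := hexp
  have glob : ∀ t : ℕ, t₀ ≤ t →
      (t : ℝ) ^ 2 * (infDist (x t) W) ^ 2 ≤ K + C ^ 2 * ((t : ℝ) - (t₀ : ℝ)) := by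
    intro t ht
    induction t, ht using Nat.le_induction with
    | base => simp [hK]
    | succ n hn ih =>
      have h := key n hn
      push_cast
      linarith
  have hsq : Tendsto (fun t : ℕ => (infDist (x t) W) ^ 2) atTop (nhds 0) := by
    have hpow : Tendsto (fun t : ℕ => (t : ℝ) ^ 2) atTop atTop :=
      (tendsto_pow_atTop (two_ne_zero)).comp tendsto_natCast_atTop_atTop
    have h1 : Tendsto (fun t : ℕ => K / (t : ℝ) ^ 2) atTop (nhds 0) :=
      tendsto_const_nhds.div_atTop hpow
    have h2 : Tendsto (fun t : ℕ => C ^ 2 / (t : ℝ)) atTop (nhds 0) :=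
      tendsto_const_nhds.div_atTop tendsto_natCast_atTop_atTop
    have hg : Tendsto (fun t : ℕ => K / (t : ℝ) ^ 2 + C ^ 2 / (t : ℝ)) atTop (nhds 0) := by
      simpa using h1.add h2
    apply squeeze_zero' (Filter.Eventually.of_forall fun t => sq_nonneg _) _ hg
    filter_upwards [eventually_ge_atTop (max t₀ 1)] with t ht
    have htt₀ : t₀ ≤ t := le_trans (le_max_left _ _) ht
    have ht1 : (1 : ℝ) ≤ (t : ℝ) := by
      exact_mod_cast le_trans (le_max_right _ _) ht
    have htpos : (0 : ℝ) < (t : ℝ) := by linarith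
    have hgl := glob t htt₀
    have heq : K / (t : ℝ) ^ 2 + C ^ 2 / (t : ℝ) = (K + C ^ 2 * (t : ℝ)) / (t : ℝ) ^ 2 := by
      field_simp
    rw [heq, le_div_iff₀ (by positivity)]
    have ht₀0 : (0 : ℝ) ≤ (t₀ : ℝ) := Nat.cast_nonneg _
    nlinarith [sq_nonneg C]
  have h := hsq.sqrt
  rw [Real.sqrt_zero] at h
  exact h.congr fun t => Real.sqrt_sq infDist_nonneg
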